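/- If for each element ω the per-element release mechanism R_ω (release iff c_ω + Z_ω > τ, with Z_ω ∼ DLap_τ(ε) independent across ω) satisfies: (a) Pr-ratio bound e^{-ε} ≤ Pr[release at count c+1]/Pr[release at count c] when both counts are ≥ 1 possible, interpreted as (ε, 0)-DP indistinguishability for counts differing by 1 when c ≥ 1, and (b) release probability at count 1 is ≤ δ and at count 0 is 0, then the joint mechanism over all elements is (ε, δ)-DP with respect to add/remove-one-record adjacency where each record contains at most one element. -/

import Mathlib

open scoped ENNReal

/-- Two multisets are adjacent if one is obtained from the other by adding or
removing one record. -/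
def Adjacent {α : Type*} (x x' : Multiset α) : Prop :=
  (∃ a, x' = a ::ₘ x) ∨ (∃ a, x = a ::ₘ x')

/-- Probability that the (random) output of `μ` lies in `E`. -/
noncomputable def Pr {Y : Type*} (μ : PMF Y) (E : Set Y) : ℝ≥0∞ := μ.toOuterMeasure E

/-- `(ε, δ)`-differential privacy for a mechanism on multiset datasets. -/
def IsDP {α Y : Type*} (M : Multiset α → PMF Y) (ε δ : ℝ) : Prop :=
  ∀ x x' : Multiset α, Adjacent x x' → ∀ E : Set Y,
    Pr (M x) E ≤ ENNReal.ofReal (Real.exp ε) * Pr (M x') E + ENNReal.ofReal δ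


/-- The candidate elements of a dataset: the union of all its records. -/
def candidates {Ω : Type*} [DecidableEq Ω] (D : Multiset (Finset Ω)) : Finset Ω :=
  D.toFinset.sup id

/-- The count `c_ω` of an element: the number of records containing it. -/
def elemCount {Ω : Type*} [DecidableEq Ω] (D : Multiset (Finset Ω)) (ω : Ω) : ℕ :=
  (D.filter fun h => ω ∈ h).card


section PPSAux

open scoped Classical

variable {Ω : Type*} [DecidableEq Ω]

/-- The mass that the joint mechanism assigns to the release set `S`. -/
noncomputable def ppMass (R : ℕ → PMF Bool) (D : Multiset (Finset Ω)) (S : Finset Ω) : ℝ≥0∞ :=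
  (∏ ω ∈ S, (R (elemCount D ω)) true) *
    ∏ ω ∈ candidates D \ S, (R (elemCount D ω)) false

lemma Pr_le_one {Y : Type*} (μ : PMF Y) (E : Set Y) : Pr μ E ≤ 1 := by
  rw [Pr, PMF.toOuterMeasure_apply]
  calc ∑' y, E.indicator μ y ≤ ∑' y, μ y :=
        ENNReal.tsum_le_tsum fun y => Set.indicator_le_self E (⇑μ) y
    _ = 1 := μ.tsum_coe

lemma elemCount_cons (h : Finset Ω) (D : Multiset (Finset Ω)) (ω : Ω) :
    elemCount (h ::ₘ D) ω = (if ω ∈ h then 1 else 0) + elemCount D ω := by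
  classical
  simp only [elemCount, Multiset.filter_cons, Multiset.card_add]
  split <;> simp

lemma candidates_cons (h : Finset Ω) (D : Multiset (Finset Ω)) :
    candidates (h ::ₘ D) = h ∪ candidates D := by
  classical
  simp [candidates, Multiset.toFinset_cons, Finset.sup_insert, Finset.sup_eq_union]

lemma mem_candidates_iff (D : Multiset (Finset Ω)) (a : Ω) :
    a ∈ candidates D ↔ 1 ≤ elemCount D a := by
  classical
  simp only [candidates, Finset.mem_sup, id, elemCount, Nat.one_le_iff_ne_zero,
    ← Nat.pos_iff_ne_zero, Multiset.card_pos_iff_exists_mem]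
  constructor
  · rintro ⟨h, hh, ha⟩
    exact ⟨h, Multiset.mem_filter.mpr ⟨Multiset.mem_toFinset.mp hh, ha⟩⟩
  · rintro ⟨h, hh⟩
    obtain ⟨hhD, ha⟩ := Multiset.mem_filter.mp hh
    exact ⟨h, Multiset.mem_toFinset.mpr hhD, ha⟩

lemma Pr_eq_sum (R : ℕ → PMF Bool) (M : Multiset (Finset Ω) → PMF (Set Ω))
    (hmass : ∀ (D : Multiset (Finset Ω)) (S : Finset Ω), S ⊆ candidates D →
      M D ↑S = ppMass R D S)
    (hnull : ∀ (D : Multiset (Finset Ω)) (T : Set Ω),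
      (¬ ∃ S : Finset Ω, ↑S = T ∧ S ⊆ candidates D) → M D T = 0)
    (D : Multiset (Finset Ω)) (E : Set (Set Ω)) :
    Pr (M D) E = ∑ S ∈ (candidates D).powerset,
      if (↑S : Set Ω) ∈ E then ppMass R D S else 0 := by
  classical
  rw [Pr, PMF.toOuterMeasure_apply]
  rw [tsum_eq_sum (s := (candidates D).powerset.image ((↑) : Finset Ω → Set Ω))
    (f := fun T => E.indicator (⇑(M D)) T) ?_]
  · rw [Finset.sum_image (fun S _ S' _ hSS => Finset.coe_injective hSS)]
    refine Finset.sum_congr rfl fun S hS => ?_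
    rw [Finset.mem_powerset] at hS
    by_cases hE : (↑S : Set Ω) ∈ E
    · simp [Set.indicator_of_mem hE, hE, hmass D S hS]
    · simp [Set.indicator_of_notMem hE, hE]
  · intro T hT
    have hMT : M D T = 0 := hnull D T (by
      rintro ⟨S, rfl, hS⟩
      exact hT (Finset.mem_image.mpr ⟨S, Finset.mem_powerset.mpr hS, rfl⟩))
    simp [Set.indicator_apply, hMT]

lemma sum_ppMass_le_one (R : ℕ → PMF Bool) (M : Multiset (Finset Ω) → PMF (Set Ω))
    (hmass : ∀ (D : Multiset (Finset Ω)) (S : Finset Ω), S ⊆ candidates D →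
      M D ↑S = ppMass R D S)
    (hnull : ∀ (D : Multiset (Finset Ω)) (T : Set Ω),
      (¬ ∃ S : Finset Ω, ↑S = T ∧ S ⊆ candidates D) → M D T = 0)
    (D : Multiset (Finset Ω)) :
    ∑ S ∈ (candidates D).powerset, ppMass R D S ≤ 1 := by
  have h := Pr_eq_sum R M hmass hnull D Set.univ
  simp only [Set.mem_univ, if_true] at h
  rw [← h]
  exact Pr_le_one _ _

end PPSAux

/-- Reduction of private partition selection to per-element guarantees: let
`R c : PMF Bool` be the release decision for an element with count `c`
(`true` = release).  If (a) for all `c ≥ 1` the decisions at counts `c` and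
`c + 1` are `(ε, 0)`-indistinguishable, and (b) the release probability at count
`1` is at most `δ` and at count `0` is `0`, then the joint mechanism that
releases each candidate element independently according to its count is
`(ε, δ)`-DP on datasets whose records contain at most one element. -/
theorem pps_reduction_to_single_element {Ω : Type*} [DecidableEq Ω]
    (ε δ : ℝ) (hε : 0 < ε) (hδ : 0 ≤ δ)
    (R : ℕ → PMF Bool)
    (hratio : ∀ c : ℕ, 1 ≤ c → ∀ E : Set Bool,
      Pr (R c) E ≤ ENNReal.ofReal (Real.exp ε) * Pr (R (c + 1)) E ∧
        Pr (R (c + 1)) E ≤ ENNReal.ofReal (Real.exp ε) * Pr (R c) E)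
    (hone : (R 1) true ≤ ENNReal.ofReal δ)
    (hzero : (R 0) true = 0)
    (M : Multiset (Finset Ω) → PMF (Set Ω))
    (hmass : ∀ (D : Multiset (Finset Ω)) (S : Finset Ω), S ⊆ candidates D →
      M D ↑S =
        (∏ ω ∈ S, (R (elemCount D ω)) true) *
          ∏ ω ∈ candidates D \ S, (R (elemCount D ω)) false)
    (hnull : ∀ (D : Multiset (Finset Ω)) (T : Set Ω),
      (¬ ∃ S : Finset Ω, ↑S = T ∧ S ⊆ candidates D) → M D T = 0) :
    ∀ x x' : Multiset (Finset Ω),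
      (∀ h ∈ x, h.card ≤ 1) → (∀ h ∈ x', h.card ≤ 1) → Adjacent x x' →
      ∀ E : Set (Set Ω),
        Pr (M x) E ≤ ENNReal.ofReal (Real.exp ε) * Pr (M x') E + ENNReal.ofReal δ := by
    classical
  have h1e : (1 : ℝ≥0∞) ≤ ENNReal.ofReal (Real.exp ε) := by
    rw [← ENNReal.ofReal_one]
    exact ENNReal.ofReal_le_ofReal (Real.one_le_exp hε.le)
  have hmass' : ∀ (D : Multiset (Finset Ω)) (S : Finset Ω), S ⊆ candidates D →
      M D ↑S = ppMass R D S := hmass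
  -- main lemma: effect of adding one record
  have key : ∀ (D : Multiset (Finset Ω)) (h : Finset Ω), h.card ≤ 1 →
      ∀ E : Set (Set Ω),
        Pr (M (h ::ₘ D)) E ≤ ENNReal.ofReal (Real.exp ε) * Pr (M D) E + ENNReal.ofReal δ ∧
        Pr (M D) E ≤ ENNReal.ofReal (Real.exp ε) * Pr (M (h ::ₘ D)) E + ENNReal.ofReal δ := by
    intro D h hcard E
    interval_cases hc : h.card
    · -- empty record : both mechanisms identical
      have hh : h = ∅ := Finset.card_eq_zero.mp hc
      subst hh
      have hcand : candidates ((∅ : Finset Ω) ::ₘ D) = candidates D := by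
        rw [candidates_cons]; simp
      have hcnt : ∀ ω, elemCount ((∅ : Finset Ω) ::ₘ D) ω = elemCount D ω := by
        intro ω; rw [elemCount_cons]; simp
      have hpp : ∀ S, ppMass R ((∅ : Finset Ω) ::ₘ D) S = ppMass R D S := by
        intro S; simp only [ppMass, hcand, hcnt]
      have hEq : Pr (M ((∅ : Finset Ω) ::ₘ D)) E = Pr (M D) E := by
        rw [Pr_eq_sum R M hmass' hnull, Pr_eq_sum R M hmass' hnull, hcand]
        exact Finset.sum_congr rfl fun S _ => by rw [hpp]
      have base : ∀ u : ℝ≥0∞, u ≤ ENNReal.ofReal (Real.exp ε) * u + ENNReal.ofReal δ := by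
        intro u
        calc u = 1 * u := (one_mul u).symm
          _ ≤ ENNReal.ofReal (Real.exp ε) * u := mul_le_mul_left h1e u
          _ ≤ _ := le_self_add
      exact ⟨hEq ▸ base _, hEq ▸ base _⟩
    · -- singleton record {a}
      obtain ⟨a, rfl⟩ := Finset.card_eq_one.mp hc
      set D' := ({a} : Finset Ω) ::ₘ D with hD'
      have hcnt_ne : ∀ ω, ω ≠ a → elemCount D' ω = elemCount D ω := by
        intro ω hω; rw [elemCount_cons]; simp [hω]
      have hcnt_a : elemCount D' a = elemCount D a + 1 := by
        rw [elemCount_cons]; simp [Nat.add_comm]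
      have hcand' : candidates D' = insert a (candidates D) := by
        rw [candidates_cons, Finset.insert_eq]
      by_cases hc1 : 1 ≤ elemCount D a
      · -- count ≥ 1 : a is already a candidate, candidates unchanged
        set c := elemCount D a with hcdef
        have haD : a ∈ candidates D := (mem_candidates_iff D a).mpr hc1
        have hcand : candidates D' = candidates D := by
          rw [hcand', Finset.insert_eq_self.mpr haD]
        have hRb : ∀ b : Bool,
            (R c) b ≤ ENNReal.ofReal (Real.exp ε) * (R (c + 1)) b ∧
            (R (c + 1)) b ≤ ENNReal.ofReal (Real.exp ε) * (R c) b := by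
          intro b
          have := hratio c hc1 {b}
          simp only [Pr, PMF.toOuterMeasure_apply_singleton] at this
          exact this
        -- per-set comparison
        have hfac : ∀ S ∈ (candidates D).powerset, ∃ (w : ℝ≥0∞) (b : Bool),
            ppMass R D S = (R c) b * w ∧
            ppMass R D' S = (R (c + 1)) b * w := by
          intro S hS
          rw [Finset.mem_powerset] at hS
          by_cases haS : a ∈ S
          · refine ⟨(∏ ω ∈ S.erase a, (R (elemCount D ω)) true) *
              ∏ ω ∈ candidates D \ S, (R (elemCount D ω)) false, true, ?_, ?_⟩
            · simp only [ppMass]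
              rw [← Finset.mul_prod_erase S _ haS, mul_assoc]
            · simp only [ppMass, hcand]
              rw [← Finset.mul_prod_erase S _ haS, hcnt_a, mul_assoc]
              congr 1
              congr 1
              · exact Finset.prod_congr rfl fun ω hω =>
                  by rw [hcnt_ne ω (Finset.ne_of_mem_erase hω)]
              · exact Finset.prod_congr rfl fun ω hω => by
                  rw [hcnt_ne ω (fun hωa => (Finset.mem_sdiff.mp hω).2 (hωa ▸ haS))]
          · refine ⟨(∏ ω ∈ S, (R (elemCount D ω)) true) *
              ∏ ω ∈ (candidates D \ S).erase a, (R (elemCount D ω)) false, false, ?_, ?_⟩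
            · have haDS : a ∈ candidates D \ S := Finset.mem_sdiff.mpr ⟨haD, haS⟩
              simp only [ppMass]
              rw [← Finset.mul_prod_erase _ _ haDS]
              ring
            · have haDS : a ∈ candidates D \ S := Finset.mem_sdiff.mpr ⟨haD, haS⟩
              simp only [ppMass, hcand]
              rw [← Finset.mul_prod_erase _ _ haDS, hcnt_a]
              rw [show (∏ ω ∈ S, (R (elemCount D' ω)) true)
                  = ∏ ω ∈ S, (R (elemCount D ω)) true from
                Finset.prod_congr rfl fun ω hω =>
                  by rw [hcnt_ne ω (fun hωa => haS (hωa ▸ hω))]]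
              rw [show (∏ ω ∈ (candidates D \ S).erase a, (R (elemCount D' ω)) false)
                  = ∏ ω ∈ (candidates D \ S).erase a, (R (elemCount D ω)) false from
                Finset.prod_congr rfl fun ω hω =>
                  by rw [hcnt_ne ω (Finset.ne_of_mem_erase hω)]]
              ring
        constructor
        · rw [Pr_eq_sum R M hmass' hnull, Pr_eq_sum R M hmass' hnull, hcand,
            Finset.mul_sum]
          refine le_trans (Finset.sum_le_sum fun S hS => ?_) le_self_add
          obtain ⟨w, b, hw1, hw2⟩ := hfac S hS
          by_cases hE : (↑S : Set Ω) ∈ E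
          · simp only [hE, if_true, hw1, hw2]
            calc (R (c+1)) b * w
                ≤ (ENNReal.ofReal (Real.exp ε) * (R c) b) * w :=
                  mul_le_mul_left (hRb b).2 w
              _ = ENNReal.ofReal (Real.exp ε) * ((R c) b * w) := by ring
          · simp [hE]
        · rw [Pr_eq_sum R M hmass' hnull, Pr_eq_sum R M hmass' hnull, hcand,
            Finset.mul_sum]
          refine le_trans (Finset.sum_le_sum fun S hS => ?_) le_self_add
          obtain ⟨w, b, hw1, hw2⟩ := hfac S hS
          by_cases hE : (↑S : Set Ω) ∈ E
          · simp only [hE, if_true, hw1, hw2]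
            calc (R c) b * w
                ≤ (ENNReal.ofReal (Real.exp ε) * (R (c+1)) b) * w :=
                  mul_le_mul_left (hRb b).1 w
              _ = ENNReal.ofReal (Real.exp ε) * ((R (c+1)) b * w) := by ring
          · simp [hE]
      · -- count 0 : a is a fresh candidate
        have hc0 : elemCount D a = 0 := Nat.eq_zero_of_not_pos hc1
        have haD : a ∉ candidates D := fun hmem =>
          hc1 ((mem_candidates_iff D a).mp hmem)
        have hcnt_a1 : elemCount D' a = 1 := by rw [hcnt_a, hc0]
        -- two structural facts
        have hP1 : ∀ S : Finset Ω, S ⊆ candidates D →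
            ppMass R D' S = (R 1) false * ppMass R D S := by
          intro S hS
          have haS : a ∉ S := fun hmem => haD (hS hmem)
          have hsd : candidates D' \ S = insert a (candidates D \ S) := by
            rw [hcand', Finset.insert_sdiff_of_notMem _ haS]
          have haDS : a ∉ candidates D \ S := fun hmem => haD (Finset.mem_sdiff.mp hmem).1
          simp only [ppMass, hsd]
          rw [Finset.prod_insert haDS, hcnt_a1]
          rw [show (∏ ω ∈ S, (R (elemCount D' ω)) true)
              = ∏ ω ∈ S, (R (elemCount D ω)) true from
            Finset.prod_congr rfl fun ω hω => by rw [hcnt_ne ω (fun hωa => haS (hωa ▸ hω))]]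
          rw [show (∏ ω ∈ candidates D \ S, (R (elemCount D' ω)) false)
              = ∏ ω ∈ candidates D \ S, (R (elemCount D ω)) false from
            Finset.prod_congr rfl fun ω hω =>
              by rw [hcnt_ne ω (fun hωa => haDS (hωa ▸ hω))]]
          ring
        have hP2 : ∀ S : Finset Ω, S ⊆ candidates D →
            ppMass R D' (insert a S) = (R 1) true * ppMass R D S := by
          intro S hS
          have haS : a ∉ S := fun hmem => haD (hS hmem)
          have hsd : candidates D' \ insert a S = candidates D \ S := by
            rw [hcand', Finset.insert_sdiff_of_mem _ (Finset.mem_insert_self a S),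
              Finset.sdiff_insert_of_notMem haD]
          simp only [ppMass, hsd]
          rw [Finset.prod_insert haS, hcnt_a1]
          rw [show (∏ ω ∈ S, (R (elemCount D' ω)) true)
              = ∏ ω ∈ S, (R (elemCount D ω)) true from
            Finset.prod_congr rfl fun ω hω => by rw [hcnt_ne ω (fun hωa => haS (hωa ▸ hω))]]
          rw [show (∏ ω ∈ candidates D \ S, (R (elemCount D' ω)) false)
              = ∏ ω ∈ candidates D \ S, (R (elemCount D ω)) false from
            Finset.prod_congr rfl fun ω hω => by
              rw [hcnt_ne ω (fun hωa => haD (hωa ▸ (Finset.mem_sdiff.mp hω).1))]]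
          ring
        have hRsum : (R 1) false + (R 1) true = 1 := by
          have := (R 1).tsum_coe
          rwa [tsum_bool] at this
        constructor
        · -- Pr (M D') E ≤ Pr (M D) E + δ
          rw [Pr_eq_sum R M hmass' hnull, Pr_eq_sum R M hmass' hnull (D := D), hcand',
            Finset.sum_powerset_insert haD]
          have t1 : (∑ S ∈ (candidates D).powerset,
                if (↑S : Set Ω) ∈ E then ppMass R D' S else 0)
              ≤ ∑ S ∈ (candidates D).powerset,
                if (↑S : Set Ω) ∈ E then ppMass R D S else 0 := by
            refine Finset.sum_le_sum fun S hS => ?_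
            rw [Finset.mem_powerset] at hS
            by_cases hE : (↑S : Set Ω) ∈ E
            · simp only [hE, if_true, hP1 S hS]
              calc (R 1) false * ppMass R D S ≤ 1 * ppMass R D S :=
                  mul_le_mul_left (PMF.coe_le_one _ _) _
                _ = ppMass R D S := one_mul _
            · simp [hE]
          have t2 : (∑ S ∈ (candidates D).powerset,
                if (↑(insert a S) : Set Ω) ∈ E then ppMass R D' (insert a S) else 0)
              ≤ ENNReal.ofReal δ := by
            calc (∑ S ∈ (candidates D).powerset,
                  if (↑(insert a S) : Set Ω) ∈ E then ppMass R D' (insert a S) else 0)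
                ≤ ∑ S ∈ (candidates D).powerset, ENNReal.ofReal δ * ppMass R D S := by
                  refine Finset.sum_le_sum fun S hS => ?_
                  rw [Finset.mem_powerset] at hS
                  split_ifs with hE
                  · rw [hP2 S hS]
                    exact mul_le_mul_left hone _
                  · exact zero_le
              _ = ENNReal.ofReal δ * ∑ S ∈ (candidates D).powerset, ppMass R D S :=
                  (Finset.mul_sum _ _ _).symm
              _ ≤ ENNReal.ofReal δ * 1 :=
                  mul_le_mul_right (sum_ppMass_le_one R M hmass' hnull D) _
              _ = ENNReal.ofReal δ := mul_one _
          calc _ ≤ (∑ S ∈ (candidates D).powerset,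
                  if (↑S : Set Ω) ∈ E then ppMass R D S else 0) + ENNReal.ofReal δ :=
                add_le_add t1 t2
            _ ≤ _ := by
                refine add_le_add_left ?_ _
                calc (∑ S ∈ (candidates D).powerset,
                      if (↑S : Set Ω) ∈ E then ppMass R D S else 0)
                    = 1 * _ := (one_mul _).symm
                  _ ≤ _ := mul_le_mul_left h1e _
        · -- Pr (M D) E ≤ Pr (M D') E + δ
          have hPrD := Pr_eq_sum R M hmass' hnull D E
          have hPrD' := Pr_eq_sum R M hmass' hnull D' E
          have split : Pr (M D) E
              ≤ (∑ S ∈ (candidates D).powerset,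
                  if (↑S : Set Ω) ∈ E then ppMass R D' S else 0) + ENNReal.ofReal δ := by
            rw [hPrD]
            have : ∀ S ∈ (candidates D).powerset,
                (if (↑S : Set Ω) ∈ E then ppMass R D S else 0)
                = (if (↑S : Set Ω) ∈ E then ppMass R D' S else 0)
                  + (R 1) true * (if (↑S : Set Ω) ∈ E then ppMass R D S else 0) := by
              intro S hS
              rw [Finset.mem_powerset] at hS
              by_cases hE : (↑S : Set Ω) ∈ E
              · simp only [hE, if_true, hP1 S hS]
                rw [← add_mul, hRsum, one_mul]
              · simp [hE]
            rw [Finset.sum_congr rfl this, Finset.sum_add_distrib, ← Finset.mul_sum]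
            refine add_le_add_right ?_ _
            calc (R 1) true * ∑ S ∈ (candidates D).powerset,
                  (if (↑S : Set Ω) ∈ E then ppMass R D S else 0)
                ≤ ENNReal.ofReal δ * 1 := by
                  refine mul_le_mul' hone ?_
                  calc (∑ S ∈ (candidates D).powerset,
                        if (↑S : Set Ω) ∈ E then ppMass R D S else 0)
                      ≤ ∑ S ∈ (candidates D).powerset, ppMass R D S :=
                        Finset.sum_le_sum fun S _ => by split <;> simp
                    _ ≤ 1 := sum_ppMass_le_one R M hmass' hnull D
              _ = ENNReal.ofReal δ := mul_one _
          have subset : (∑ S ∈ (candidates D).powerset,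
                if (↑S : Set Ω) ∈ E then ppMass R D' S else 0) ≤ Pr (M D') E := by
            rw [hPrD', hcand']
            exact Finset.sum_le_sum_of_subset
              (Finset.powerset_mono.mpr (Finset.subset_insert a _))
          calc Pr (M D) E ≤ _ := split
            _ ≤ Pr (M D') E + ENNReal.ofReal δ := add_le_add_left subset _
            _ ≤ _ := by
                refine add_le_add_left ?_ _
                calc Pr (M D') E = 1 * Pr (M D') E := (one_mul _).symm
                  _ ≤ _ := mul_le_mul_left h1e _
  rintro x x' hx hx' (⟨a, rfl⟩ | ⟨a, rfl⟩) E
  · exact (key x a (hx' a (Multiset.mem_cons_self a x)) E).2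
  · exact (key x' a (hx a (Multiset.mem_cons_self a x')) E).1
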